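/- arXiv:2507.09032 — 2 statements merged into one kernel-verified Lean document; each statement's English description precedes it below -/
import Mathlib

section
/- (Analytic form of the joint probability, second part of Lemma 5.1.) Fix Y ∈ ℤ, integers 1 ≤ r ≤ D, 0 ≤ d ≤ D, and (z_1,…,z_d) ∈ ℤ^d with counts (n1, n2, n3), so d = n1+n2+n3 and D−d is the number of unobserved draws. Then P(os_r(Z) = Y ∧ Z_1 = z_1, …, Z_d = z_d) = Q · ∏_{t=1}^d f(z_t), where: Q = 0 if n1 ≥ r or n3 ≥ D−r+1; otherwise, Q = F^{(r−n1−n2, D−d)}(Y) − F^{(r−n1, D−d)}(Y−1) if n2 < min(r−n1, D−n3−r+1); Q = 1 − F^{(r−n1, D−d)}(Y−1) if r−n1 ≤ n2 < D−n3−r+1; Q = F^{(r−n1−n2, D−d)}(Y) if D−n3−r+1 ≤ n2 < r−n1; and Q = 1 if n2 ≥ max(r−n1, D−n3−r+1). -/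
open MeasureTheory

/-- The measure on ℤ with mass function `f`. -/
noncomputable def parentMeasure (f : ℤ → ℝ) : Measure ℤ :=
  Measure.count.withDensity fun z => ENNReal.ofReal (f z)

/-- `P f D S` is the probability of the event `S` under the `D`-fold product of the
measure on ℤ with pmf `f`, i.e. the law of `D` i.i.d. draws `Z = (Z_1, …, Z_D)` from `f`. -/
noncomputable def P (f : ℤ → ℝ) (D : ℕ) (S : Set (Fin D → ℤ)) : ℝ :=
  (Measure.pi (fun _ : Fin D => parentMeasure f) S).toReal

/-- The CDF of `f`: `F(y) = ∑_{t ≤ y} f(t)`. -/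
noncomputable def Fcdf (f : ℤ → ℝ) (y : ℤ) : ℝ := ∑' z : {t : ℤ // t ≤ y}, f z.1

/-- The number of entries of `z` that are `≤ y`. -/
def countLe {n : ℕ} (z : Fin n → ℤ) (y : ℤ) : ℕ :=
  (Finset.univ.filter fun i => z i ≤ y).card

/-- `osEq r z Y` says that the `r`-th smallest entry of `z` (counting multiplicity)
equals `Y`: the `r`-th order statistic is `≤ Y` but not `≤ Y - 1`. -/
def osEq {n : ℕ} (r : ℕ) (z : Fin n → ℤ) (Y : ℤ) : Prop :=
  r ≤ countLe z Y ∧ countLe z (Y - 1) < r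

/-- The order-statistic CDF `F^{(a,m)}(y) = ∑_{t=a}^{m} (m choose t) F(y)^t (1−F(y))^{m−t}`. -/
noncomputable def osCDF (f : ℤ → ℝ) (a m : ℕ) (y : ℤ) : ℝ :=
  ∑ t ∈ Finset.Icc a m, (m.choose t : ℝ) * Fcdf f y ^ t * (1 - Fcdf f y) ^ (m - t)

lemma parentMeasure_apply (f : ℤ → ℝ) (s : Set ℤ) :
    parentMeasure f s = ∑' x : s, ENNReal.ofReal (f x) := by
  rw [parentMeasure, withDensity_apply _ (Set.to_countable s).measurableSet,
    lintegral_countable _ (Set.to_countable s)]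
  simp [Measure.count_singleton]

lemma ofReal_tsum_subtype (f : ℤ → ℝ) (hf0 : ∀ z, 0 ≤ f z) (hf1 : HasSum f 1) (s : Set ℤ) :
    ∑' x : s, ENNReal.ofReal (f x) = ENNReal.ofReal (∑' x : s, f x) :=
  (ENNReal.ofReal_tsum_of_nonneg (fun _ => hf0 _) (hf1.summable.subtype _)).symm

lemma parentMeasure_univ (f : ℤ → ℝ) (hf0 : ∀ z, 0 ≤ f z) (hf1 : HasSum f 1) :
    parentMeasure f Set.univ = 1 := by
  rw [parentMeasure_apply, ofReal_tsum_subtype f hf0 hf1]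
  rw [tsum_univ (fun x => f x), hf1.tsum_eq, ENNReal.ofReal_one]

lemma parentMeasure_Iic (f : ℤ → ℝ) (hf0 : ∀ z, 0 ≤ f z) (hf1 : HasSum f 1) (y : ℤ) :
    parentMeasure f (Set.Iic y) = ENNReal.ofReal (Fcdf f y) := by
  rw [parentMeasure_apply, ofReal_tsum_subtype f hf0 hf1]
  rfl

lemma parentMeasure_Iic_le_one (f : ℤ → ℝ) (hf0 : ∀ z, 0 ≤ f z) (hf1 : HasSum f 1) (y : ℤ) :
    parentMeasure f (Set.Iic y) ≤ 1 := by
  rw [← parentMeasure_univ f hf0 hf1]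
  exact measure_mono (Set.subset_univ _)

lemma parentMeasure_Ioi (f : ℤ → ℝ) (hf0 : ∀ z, 0 ≤ f z) (hf1 : HasSum f 1) (y : ℤ) :
    parentMeasure f (Set.Ioi y) = 1 - parentMeasure f (Set.Iic y) := by
  have h : parentMeasure f (Set.Iic y ∪ Set.Ioi y)
      = parentMeasure f (Set.Iic y) + parentMeasure f (Set.Ioi y) :=
    measure_union (by simp [Set.disjoint_left]) (Set.to_countable _).measurableSet
  rw [Set.Iic_union_Ioi, parentMeasure_univ f hf0 hf1] at h
  exact ENNReal.eq_sub_of_add_eq (ne_top_of_le_ne_top ENNReal.one_ne_top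
    (parentMeasure_Iic_le_one f hf0 hf1 y)) (by rw [add_comm]; exact h.symm)

instance : SigmaFinite (Measure.count : Measure ℤ) := by
  refine ⟨⟨⟨fun n => {x : ℤ | x.natAbs ≤ n}, fun _ => trivial, fun n => ?_, ?_⟩⟩⟩
  · have hfin : ({x : ℤ | x.natAbs ≤ n} : Set ℤ).Finite := by
      refine (Set.finite_Icc (-(n:ℤ)) n).subset fun x hx => ?_
      simp only [Set.mem_setOf_eq] at hx
      constructor <;> omega
    rw [Measure.count_apply_finite _ hfin]
    exact ENNReal.natCast_lt_top _
  · ext x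
    simp only [Set.mem_iUnion, Set.mem_setOf_eq, Set.mem_univ, iff_true]
    exact ⟨x.natAbs, le_refl _⟩

instance (f : ℤ → ℝ) : SigmaFinite (parentMeasure f) := by
  unfold parentMeasure; infer_instance

lemma pi_singleton (f : ℤ → ℝ) (n : ℕ) (ω : Fin n → ℤ) :
    Measure.pi (fun _ : Fin n => parentMeasure f) {ω} = ∏ i, parentMeasure f {ω i} := by
  rw [← Set.univ_pi_singleton ω, Measure.pi_pi]

lemma pi_apply_tsum (f : ℤ → ℝ) (n : ℕ) (S : Set (Fin n → ℤ)) :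
    Measure.pi (fun _ : Fin n => parentMeasure f) S
      = ∑' ω : S, ∏ i, parentMeasure f {ω.1 i} := by
  conv_lhs => rw [show S = ⋃ ω ∈ S, {ω} from (Set.biUnion_of_singleton S).symm]
  rw [measure_biUnion (Set.to_countable S) ?_ (fun ω _ => (Set.to_countable _).measurableSet)]
  · simp only [pi_singleton]
  · intro a _ b _ hab
    simp [Function.onFun, hab]

def box (y : ℤ) {m : ℕ} (A : Finset (Fin m)) : Set (Fin m → ℤ) :=
  Set.univ.pi fun i => if i ∈ A then Set.Iic y else Set.Ioi y

lemma mem_box {y : ℤ} {m : ℕ} {A : Finset (Fin m)} {τ : Fin m → ℤ} :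
    τ ∈ box y A ↔ Finset.univ.filter (fun i => τ i ≤ y) = A := by
  simp only [box, Set.mem_univ_pi]
  constructor
  · intro h; ext i
    have := h i
    simp only [Finset.mem_filter, Finset.mem_univ, true_and]
    by_cases hi : i ∈ A <;> simp only [hi, if_true, if_false, Set.mem_Iic, Set.mem_Ioi] at this <;>
      simp only [hi, iff_true, iff_false]
    · exact this
    · omega
  · rintro rfl i
    by_cases hi : τ i ≤ y <;> simp [hi]
    omega

lemma countEq_event (y : ℤ) (m t : ℕ) :
    {τ : Fin m → ℤ | countLe τ y = t}
      = ⋃ A ∈ Finset.univ.powersetCard t, box y A := by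
  ext τ
  simp only [Set.mem_setOf_eq, Set.mem_iUnion, mem_box, Finset.mem_powersetCard_univ]
  constructor
  · intro h
    exact ⟨Finset.univ.filter (fun i => τ i ≤ y), h, rfl⟩
  · rintro ⟨A, hA, rfl⟩
    exact hA

lemma box_measure (f : ℤ → ℝ) (hf0 : ∀ z, 0 ≤ f z) (hf1 : HasSum f 1) (y : ℤ) (m : ℕ)
    (A : Finset (Fin m)) :
    Measure.pi (fun _ : Fin m => parentMeasure f) (box y A)
      = parentMeasure f (Set.Iic y) ^ A.card
        * (1 - parentMeasure f (Set.Iic y)) ^ (m - A.card) := by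
  rw [box, Measure.pi_pi]
  have : ∀ i : Fin m, parentMeasure f (if i ∈ A then Set.Iic y else Set.Ioi y)
      = if i ∈ A then parentMeasure f (Set.Iic y) else (1 - parentMeasure f (Set.Iic y)) := by
    intro i
    by_cases hi : i ∈ A <;> simp [hi, parentMeasure_Ioi f hf0 hf1 y]
  simp only [this]
  rw [Finset.prod_ite, Finset.prod_const, Finset.prod_const]
  congr 1
  · congr 1
    simp [Finset.filter_mem_eq_inter]
  · congr 1
    rw [Finset.filter_not, Finset.filter_mem_eq_inter, Finset.univ_inter,
      Finset.card_sdiff_of_subset (Finset.subset_univ A)]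
    simp

lemma countEq_measure (f : ℤ → ℝ) (hf0 : ∀ z, 0 ≤ f z) (hf1 : HasSum f 1) (y : ℤ) (m t : ℕ) :
    Measure.pi (fun _ : Fin m => parentMeasure f) {τ | countLe τ y = t}
      = (m.choose t) * parentMeasure f (Set.Iic y) ^ t
        * (1 - parentMeasure f (Set.Iic y)) ^ (m - t) := by
  have hdisj : (↑((Finset.univ : Finset (Fin m)).powersetCard t) : Set (Finset (Fin m))).PairwiseDisjoint
      (box y (m := m)) := by
    intro A hA B hB hAB
    simp only [Function.onFun]
    rw [Set.disjoint_left]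
    intro τ hτA hτB
    exact hAB ((mem_box.mp hτA).symm.trans (mem_box.mp hτB))
  rw [countEq_event y m t, measure_biUnion_finset hdisj
    (fun A _ => (Set.to_countable (box y A)).measurableSet)]
  · rw [Finset.sum_congr rfl (fun A hA => box_measure f hf0 hf1 y m A)]
    have : ∀ A ∈ (Finset.univ : Finset (Fin m)).powersetCard t,
        parentMeasure f (Set.Iic y) ^ A.card * (1 - parentMeasure f (Set.Iic y)) ^ (m - A.card)
        = parentMeasure f (Set.Iic y) ^ t * (1 - parentMeasure f (Set.Iic y)) ^ (m - t) := by
      intro A hA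
      rw [(Finset.mem_powersetCard_univ.mp hA : A.card = t)]
    rw [Finset.sum_congr rfl this, Finset.sum_const, Finset.card_powersetCard,
      Finset.card_univ, Fintype.card_fin, nsmul_eq_mul, mul_assoc]

lemma countGe_measure (f : ℤ → ℝ) (hf0 : ∀ z, 0 ≤ f z) (hf1 : HasSum f 1) (y : ℤ) (m a : ℕ) :
    Measure.pi (fun _ : Fin m => parentMeasure f) {τ | a ≤ countLe τ y}
      = ∑ t ∈ Finset.Icc a m, (m.choose t) * parentMeasure f (Set.Iic y) ^ t
        * (1 - parentMeasure f (Set.Iic y)) ^ (m - t) := by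
  have hev : {τ : Fin m → ℤ | a ≤ countLe τ y}
      = ⋃ t ∈ Finset.Icc a m, {τ | countLe τ y = t} := by
    ext τ
    have hle : countLe τ y ≤ m := by
      simpa [countLe] using (Finset.card_filter_le Finset.univ fun i => τ i ≤ y)
    simp only [Set.mem_setOf_eq, Set.mem_iUnion, Finset.mem_Icc]
    exact ⟨fun h => ⟨countLe τ y, ⟨h, hle⟩, rfl⟩, fun ⟨t, ⟨h1, _⟩, h3⟩ => h3 ▸ h1⟩
  rw [hev, measure_biUnion_finset ?_ (fun t _ => (Set.to_countable _).measurableSet)]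
  · exact Finset.sum_congr rfl fun t _ => countEq_measure f hf0 hf1 y m t
  · intro s _ t _ hst
    simp only [Function.onFun]
    rw [Set.disjoint_left]
    intro τ h1 h2
    simp only [Set.mem_setOf_eq] at h1 h2
    exact hst (h1.symm.trans h2)

lemma Fcdf_nonneg (f : ℤ → ℝ) (hf0 : ∀ z, 0 ≤ f z) (y : ℤ) : 0 ≤ Fcdf f y :=
  tsum_nonneg fun _ => hf0 _

lemma Fcdf_le_one (f : ℤ → ℝ) (hf0 : ∀ z, 0 ≤ f z) (hf1 : HasSum f 1) (y : ℤ) :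
    Fcdf f y ≤ 1 := by
  have h := parentMeasure_Iic_le_one f hf0 hf1 y
  rw [parentMeasure_Iic f hf0 hf1 y] at h
  exact (ENNReal.ofReal_le_one).mp h

lemma osCDF_nonneg (f : ℤ → ℝ) (hf0 : ∀ z, 0 ≤ f z) (hf1 : HasSum f 1) (a m : ℕ) (y : ℤ) :
    0 ≤ osCDF f a m y := by
  refine Finset.sum_nonneg fun t _ => ?_
  have h1 := Fcdf_nonneg f hf0 y
  have h2 := Fcdf_le_one f hf0 hf1 y
  have h3 : (0:ℝ) ≤ 1 - Fcdf f y := by linarith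
  positivity

lemma osCDF_zero (f : ℤ → ℝ) (m : ℕ) (y : ℤ) : osCDF f 0 m y = 1 := by
  have h := add_pow (Fcdf f y) (1 - Fcdf f y) m
  simp only [add_sub_cancel, one_pow] at h
  rw [osCDF, show Finset.Icc 0 m = Finset.range (m+1) by ext x; simp [Nat.lt_succ_iff]]
  conv_rhs => rw [h]
  exact Finset.sum_congr rfl fun t _ => by ring

lemma osCDF_of_gt (f : ℤ → ℝ) (a m : ℕ) (h : m < a) (y : ℤ) : osCDF f a m y = 0 := by
  rw [osCDF, Finset.Icc_eq_empty (by omega), Finset.sum_empty]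

lemma countGe_measure' (f : ℤ → ℝ) (hf0 : ∀ z, 0 ≤ f z) (hf1 : HasSum f 1) (y : ℤ) (m a : ℕ) :
    Measure.pi (fun _ : Fin m => parentMeasure f) {τ | a ≤ countLe τ y}
      = ENNReal.ofReal (osCDF f a m y) := by
  rw [countGe_measure f hf0 hf1 y m a, osCDF,
    ENNReal.ofReal_sum_of_nonneg (fun t _ => by
      have h1 := Fcdf_nonneg f hf0 y
      have h2 := Fcdf_le_one f hf0 hf1 y
      have h3 : (0:ℝ) ≤ 1 - Fcdf f y := by linarith
      positivity)]
  refine Finset.sum_congr rfl fun t _ => ?_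
  have h1 := Fcdf_nonneg f hf0 y
  have h2 := Fcdf_le_one f hf0 hf1 y
  rw [parentMeasure_Iic f hf0 hf1 y,
    ENNReal.ofReal_mul (by positivity), ENNReal.ofReal_mul (by positivity),
    ENNReal.ofReal_pow h1, ENNReal.ofReal_pow (by linarith), ENNReal.ofReal_natCast,
    ENNReal.ofReal_sub 1 h1, ENNReal.ofReal_one]

def eFin {D d : ℕ} (hd : d ≤ D) : Fin d ⊕ Fin (D - d) ≃ Fin D :=
  finSumFinEquiv.trans (finCongr (by omega))

lemma eFin_inl {D d : ℕ} (hd : d ≤ D) (t : Fin d) :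
    eFin hd (Sum.inl t) = Fin.castLE hd t := by
  ext
  simp [eFin]

def Phi {D d : ℕ} (hd : d ≤ D) : ((Fin d → ℤ) × (Fin (D - d) → ℤ)) → (Fin D → ℤ) :=
  fun pq => (MeasurableEquiv.piCongrLeft (fun _ : Fin D => ℤ) (eFin hd))
    ((MeasurableEquiv.sumPiEquivProdPi (fun _ : Fin d ⊕ Fin (D - d) => ℤ)).symm pq)

lemma Phi_inl {D d : ℕ} (hd : d ≤ D) (p : Fin d → ℤ) (q : Fin (D - d) → ℤ) (t : Fin d) :
    Phi hd (p, q) (eFin hd (Sum.inl t)) = p t := by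
  rw [Phi, MeasurableEquiv.coe_piCongrLeft, MeasurableEquiv.coe_sumPiEquivProdPi_symm]
  exact Equiv.piCongrLeft_sumInl (fun _ => ℤ) (eFin hd) p q t

lemma Phi_inr {D d : ℕ} (hd : d ≤ D) (p : Fin d → ℤ) (q : Fin (D - d) → ℤ) (j : Fin (D - d)) :
    Phi hd (p, q) (eFin hd (Sum.inr j)) = q j := by
  rw [Phi, MeasurableEquiv.coe_piCongrLeft, MeasurableEquiv.coe_sumPiEquivProdPi_symm]
  exact Equiv.piCongrLeft_sumInr (fun _ => ℤ) (eFin hd) p q j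

lemma Phi_measurePreserving (f : ℤ → ℝ) {D d : ℕ} (hd : d ≤ D) :
    MeasurePreserving (Phi hd)
      ((Measure.pi fun _ : Fin d => parentMeasure f).prod
        (Measure.pi fun _ : Fin (D - d) => parentMeasure f))
      (Measure.pi fun _ : Fin D => parentMeasure f) := by
  have h1 := measurePreserving_piCongrLeft (fun _ : Fin D => parentMeasure f) (eFin hd)
  have h2 := measurePreserving_sumPiEquivProdPi_symm
    (X := fun _ : Fin d ⊕ Fin (D - d) => ℤ) (fun _ => parentMeasure f)
  exact h1.comp h2

lemma Phi_countLe {D d : ℕ} (hd : d ≤ D) (p : Fin d → ℤ) (q : Fin (D - d) → ℤ) (y : ℤ) :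
    countLe (Phi hd (p, q)) y = countLe p y + countLe q y := by
  classical
  unfold countLe
  rw [Finset.card_filter, Finset.card_filter, Finset.card_filter]
  rw [← Equiv.sum_comp (eFin hd) (fun i => if Phi hd (p, q) i ≤ y then 1 else 0)]
  rw [Fintype.sum_sum_type]
  congr 1
  · exact Finset.sum_congr rfl fun t _ => by rw [Phi_inl]
  · exact Finset.sum_congr rfl fun j _ => by rw [Phi_inr]

lemma tsum_set_singleton (g : ℤ → ENNReal) (x : ℤ) : ∑' a : ({x} : Set ℤ), g a = g x := by
  rw [tsum_eq_single (⟨x, rfl⟩ : ({x} : Set ℤ))]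
  intro b hb
  exact absurd (Subtype.ext (Set.mem_singleton_iff.mp b.2)) hb

lemma parentMeasure_singleton (f : ℤ → ℝ) (x : ℤ) :
    parentMeasure f {x} = ENNReal.ofReal (f x) := by
  rw [parentMeasure_apply]
  exact tsum_set_singleton (fun a => ENNReal.ofReal (f a)) x

lemma countLe_le {n : ℕ} (q : Fin n → ℤ) (y : ℤ) : countLe q y ≤ n := by
  simpa [countLe] using Finset.card_filter_le (Finset.univ : Finset (Fin n)) (fun i => q i ≤ y)

lemma countLe_mono {n : ℕ} (q : Fin n → ℤ) {y y' : ℤ} (h : y ≤ y') :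
    countLe q y ≤ countLe q y' := by
  refine Finset.card_le_card ?_
  intro i hi
  simp only [Finset.mem_filter, Finset.mem_univ, true_and] at hi ⊢
  omega


/-- **Lemma 5.1, second part** (analytic form of the joint probability): the joint
probability of observing the prefix `z ∈ ℤ^d` together with `os_r(Z) = Y` equals
`Q · ∏_t f(z_t)`, where `Q` is the case-defined expression in the counts
`n1 = #{t : z_t < Y}`, `n2 = #{t : z_t = Y}`, `n3 = #{t : z_t > Y}`. -/
theorem order_statistic_joint_probability_form
    (f : ℤ → ℝ) (hf0 : ∀ z, 0 ≤ f z) (hf1 : HasSum f 1)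
    (Y : ℤ) (D r d : ℕ) (hr1 : 1 ≤ r) (hrD : r ≤ D) (hd : d ≤ D)
    (z : Fin d → ℤ) :
    P f D {ω | osEq r ω Y ∧ ∀ t : Fin d, ω (Fin.castLE hd t) = z t}
      = (let n1 := (Finset.univ.filter fun t => z t < Y).card
         let n2 := (Finset.univ.filter fun t => z t = Y).card
         let n3 := (Finset.univ.filter fun t => Y < z t).card
         if r ≤ n1 ∨ D - r + 1 ≤ n3 then 0
         else if n2 < min (r - n1) (D - n3 - r + 1) then
           osCDF f (r - n1 - n2) (D - d) Y - osCDF f (r - n1) (D - d) (Y - 1)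
         else if r - n1 ≤ n2 ∧ n2 < D - n3 - r + 1 then
           1 - osCDF f (r - n1) (D - d) (Y - 1)
         else if D - n3 - r + 1 ≤ n2 ∧ n2 < r - n1 then
           osCDF f (r - n1 - n2) (D - d) Y
         else 1) * ∏ t, f (z t) := by
  classical
  show P f D {ω | osEq r ω Y ∧ ∀ t : Fin d, ω (Fin.castLE hd t) = z t}
      = (if r ≤ (Finset.univ.filter fun t => z t < Y).card
            ∨ D - r + 1 ≤ (Finset.univ.filter fun t => Y < z t).card then 0
         else if (Finset.univ.filter fun t => z t = Y).card
            < min (r - (Finset.univ.filter fun t => z t < Y).card)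
              (D - (Finset.univ.filter fun t => Y < z t).card - r + 1) then
           osCDF f (r - (Finset.univ.filter fun t => z t < Y).card
              - (Finset.univ.filter fun t => z t = Y).card) (D - d) Y
             - osCDF f (r - (Finset.univ.filter fun t => z t < Y).card) (D - d) (Y - 1)
         else if r - (Finset.univ.filter fun t => z t < Y).card
              ≤ (Finset.univ.filter fun t => z t = Y).card
            ∧ (Finset.univ.filter fun t => z t = Y).card
              < D - (Finset.univ.filter fun t => Y < z t).card - r + 1 then
           1 - osCDF f (r - (Finset.univ.filter fun t => z t < Y).card) (D - d) (Y - 1)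
         else if D - (Finset.univ.filter fun t => Y < z t).card - r + 1
              ≤ (Finset.univ.filter fun t => z t = Y).card
            ∧ (Finset.univ.filter fun t => z t = Y).card
              < r - (Finset.univ.filter fun t => z t < Y).card then
           osCDF f (r - (Finset.univ.filter fun t => z t < Y).card
              - (Finset.univ.filter fun t => z t = Y).card) (D - d) Y
         else 1) * ∏ t, f (z t)
  set n1 := (Finset.univ.filter fun t => z t < Y).card with hn1
  set n2 := (Finset.univ.filter fun t => z t = Y).card with hn2
  set n3 := (Finset.univ.filter fun t => Y < z t).card with hn3
  have hzY : countLe z Y = n1 + n2 := by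
    simp only [countLe, hn1, hn2, Finset.card_filter]
    rw [← Finset.sum_add_distrib]
    refine Finset.sum_congr rfl fun t _ => ?_
    split_ifs <;> omega
  have hzY1 : countLe z (Y - 1) = n1 := by
    simp only [countLe, hn1, Finset.card_filter]
    refine Finset.sum_congr rfl fun t _ => ?_
    split_ifs <;> omega
  have hd3 : n1 + n2 + n3 = d := by
    simp only [hn1, hn2, hn3, Finset.card_filter]
    rw [← Finset.sum_add_distrib, ← Finset.sum_add_distrib]
    have : ∀ t ∈ (Finset.univ : Finset (Fin d)), ((if z t < Y then 1 else 0)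
        + (if z t = Y then 1 else 0) + (if Y < z t then 1 else 0)) = 1 := by
      intro t _
      split_ifs <;> omega
    rw [Finset.sum_congr rfl this, Finset.sum_const, smul_eq_mul, mul_one,
      Finset.card_univ, Fintype.card_fin]
  set E : Set (Fin (D - d) → ℤ) :=
    {q | r ≤ (n1 + n2) + countLe q Y ∧ n1 + countLe q (Y - 1) < r} with hE
  have hpre : Phi hd ⁻¹' {ω | osEq r ω Y ∧ ∀ t : Fin d, ω (Fin.castLE hd t) = z t}
      = ({z} : Set (Fin d → ℤ)) ×ˢ E := by
    ext pq
    obtain ⟨p, q⟩ := pq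
    simp only [Set.mem_preimage, Set.mem_setOf_eq, Set.mem_prod, Set.mem_singleton_iff, osEq,
      hE]
    constructor
    · rintro ⟨⟨h1, h2⟩, h3⟩
      have hp : p = z := funext fun t => by
        have h3t := h3 t
        rw [← eFin_inl hd t] at h3t
        rw [← Phi_inl hd p q t]
        exact h3t
      subst hp
      rw [Phi_countLe hd p q Y, hzY] at h1
      rw [Phi_countLe hd p q (Y - 1), hzY1] at h2
      exact ⟨rfl, h1, h2⟩
    · rintro ⟨rfl, h1, h2⟩
      refine ⟨⟨?_, ?_⟩, fun t => ?_⟩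
      · rw [Phi_countLe hd p q Y, hzY]; exact h1
      · rw [Phi_countLe hd p q (Y - 1), hzY1]; exact h2
      · rw [← eFin_inl hd t, Phi_inl hd p q t]
  have hkey : P f D {ω | osEq r ω Y ∧ ∀ t : Fin d, ω (Fin.castLE hd t) = z t}
      = ((∏ t, ENNReal.ofReal (f (z t)))
          * Measure.pi (fun _ : Fin (D - d) => parentMeasure f) E).toReal := by
    rw [P, ← (Phi_measurePreserving f hd).measure_preimage
      (Set.to_countable _).measurableSet.nullMeasurableSet, hpre, Measure.prod_prod,
      pi_singleton]
    congr 2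
    exact Finset.prod_congr rfl fun t _ => parentMeasure_singleton f (z t)
  rw [hkey]
  by_cases hcase : r ≤ n1 ∨ D - r + 1 ≤ n3
  · have hEe : E = ∅ := by
      ext q
      simp only [hE, Set.mem_setOf_eq, Set.mem_empty_iff_false, iff_false, not_and, not_lt]
      intro h1
      have hq := countLe_le q Y
      rcases hcase with h | h
      · omega
      · omega
    rw [if_pos hcase, hEe, measure_empty, mul_zero, ENNReal.toReal_zero, zero_mul]
  · push_neg at hcase
    obtain ⟨hc1, hc3⟩ := hcase
    rw [if_neg (by push_neg; exact ⟨hc1, hc3⟩)]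
    have hEAB : E = {q : Fin (D - d) → ℤ | r - n1 - n2 ≤ countLe q Y}
        \ {q : Fin (D - d) → ℤ | r - n1 ≤ countLe q (Y - 1)} := by
      ext q
      have hmono := countLe_mono q (by omega : Y - 1 ≤ Y)
      simp only [hE, Set.mem_setOf_eq, Set.mem_diff, not_le]
      omega
    have hBA : {q : Fin (D - d) → ℤ | r - n1 ≤ countLe q (Y - 1)}
        ⊆ {q : Fin (D - d) → ℤ | r - n1 - n2 ≤ countLe q Y} := by
      intro q hq
      simp only [Set.mem_setOf_eq] at hq ⊢
      have hmono := countLe_mono q (by omega : Y - 1 ≤ Y)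
      omega
    have hXnn := osCDF_nonneg f hf0 hf1 (r - n1 - n2) (D - d) Y
    have hX'nn := osCDF_nonneg f hf0 hf1 (r - n1) (D - d) (Y - 1)
    have hle : osCDF f (r - n1) (D - d) (Y - 1) ≤ osCDF f (r - n1 - n2) (D - d) Y := by
      have hm := measure_mono (μ := Measure.pi (fun _ : Fin (D - d) => parentMeasure f)) hBA
      rw [countGe_measure' f hf0 hf1 (Y - 1) (D - d) (r - n1),
        countGe_measure' f hf0 hf1 Y (D - d) (r - n1 - n2)] at hm
      exact (ENNReal.ofReal_le_ofReal_iff hXnn).mp hm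
    rw [hEAB, measure_diff hBA (Set.to_countable _).measurableSet.nullMeasurableSet
      (by rw [countGe_measure' f hf0 hf1 (Y - 1) (D - d) (r - n1)]; exact ENNReal.ofReal_ne_top),
      countGe_measure' f hf0 hf1 (Y - 1) (D - d) (r - n1),
      countGe_measure' f hf0 hf1 Y (D - d) (r - n1 - n2),
      ← ENNReal.ofReal_sub _ hX'nn,
      ← ENNReal.ofReal_prod_of_nonneg (fun t _ => hf0 (z t)),
      ← ENNReal.ofReal_mul (Finset.prod_nonneg fun t _ => hf0 (z t)),
      ENNReal.toReal_ofReal (mul_nonneg (Finset.prod_nonneg fun t _ => hf0 (z t))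
        (by linarith))]
    rw [mul_comm]
    congr 1
    have hmd : D - d = D - (n1 + n2 + n3) := by rw [hd3]
    split_ifs with h1 h2 h3
    · rfl
    · rw [show r - n1 - n2 = 0 by omega, osCDF_zero]
    · rw [osCDF_of_gt f (r - n1) (D - d) (by omega) (Y - 1), sub_zero]
    · rw [show r - n1 - n2 = 0 by omega, osCDF_zero,
        osCDF_of_gt f (r - n1) (D - d) (by omega) (Y - 1), sub_zero]
end

section
/- (Closed form of the joint probability with n2 ties, proved by induction within the proof of Lemma 5.1.) Fix Y ∈ ℤ, integers 1 ≤ r ≤ D and 0 ≤ n2 ≤ D. Then P(Z_1 = Y, …, Z_{n2} = Y ∧ os_r(Z) = Y) = f(Y)^{n2} · Ψ, where: Ψ = F^{(r−n2, D−n2)}(Y) − F^{(r, D−n2)}(Y−1) if n2 < min(r, D−r+1); Ψ = 1 − F^{(r, D−n2)}(Y−1) if r ≤ n2 < D−r+1; Ψ = F^{(r−n2, D−n2)}(Y) if D−r+1 ≤ n2 < r; and Ψ = 1 if max(r, D−r+1) ≤ n2 ≤ D. -/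
open MeasureTheory

/-! ### Auxiliary lemmas -/

lemma parent_apply (f : ℤ → ℝ) (s : Set ℤ) :
    parentMeasure f s = ∑' z : s, ENNReal.ofReal (f z.1) := by
  rw [parentMeasure, withDensity_apply _ s.to_countable.measurableSet,
    ← lintegral_indicator s.to_countable.measurableSet _, lintegral_count,
    ← _root_.tsum_subtype]

lemma parent_singleton (f : ℤ → ℝ) (Y : ℤ) :
    parentMeasure f {Y} = ENNReal.ofReal (f Y) := by
  rw [parent_apply]
  refine tsum_eq_single (⟨Y, rfl⟩ : ({Y} : Set ℤ)) ?_
  rintro ⟨b, hb⟩ hb'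
  exact absurd (Subtype.ext (Set.mem_singleton_iff.mp hb)) hb'

lemma parent_Iic (f : ℤ → ℝ) (hf0 : ∀ z, 0 ≤ f z) (hf1 : HasSum f 1) (y : ℤ) :
    parentMeasure f {z | z ≤ y} = ENNReal.ofReal (Fcdf f y) := by
  rw [parent_apply]
  exact (ENNReal.ofReal_tsum_of_nonneg (f := fun z : ↑{z : ℤ | z ≤ y} => f z.1)
    (fun n => hf0 _) (hf1.summable.subtype _)).symm

lemma parent_prob (f : ℤ → ℝ) (hf0 : ∀ z, 0 ≤ f z) (hf1 : HasSum f 1) :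
    IsProbabilityMeasure (parentMeasure f) := by
  constructor
  rw [parent_apply, tsum_univ (fun z => ENNReal.ofReal (f z)),
    ← ENNReal.ofReal_tsum_of_nonneg hf0 hf1.summable, hf1.tsum_eq, ENNReal.ofReal_one]

lemma parent_Ioi (f : ℤ → ℝ) (hf0 : ∀ z, 0 ≤ f z) (hf1 : HasSum f 1) (y : ℤ) :
    parentMeasure f {z | y < z} = ENNReal.ofReal (1 - Fcdf f y) := by
  have := parent_prob f hf0 hf1
  have hc : {z : ℤ | y < z} = {z | z ≤ y}ᶜ := by ext z; simp [not_le]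
  rw [hc, prob_compl_eq_one_sub (s := {z | z ≤ y}) (Set.to_countable _).measurableSet,
    parent_Iic f hf0 hf1, ENNReal.ofReal_sub _ (Fcdf_nonneg f hf0 y), ENNReal.ofReal_one]

def P1 (D n2 : ℕ) : Finset (Fin D) := Finset.univ.filter fun i => i.1 < n2
def Rst (D n2 : ℕ) : Finset (Fin D) := Finset.univ.filter fun i => n2 ≤ i.1

lemma card_P1 (D n2 : ℕ) (h : n2 ≤ D) : (P1 D n2).card = n2 := by
  have : P1 D n2 = (Finset.range n2).attachFin
      (fun m hm => lt_of_lt_of_le (Finset.mem_range.mp hm) h) := by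
    ext i; simp [P1, Finset.mem_attachFin]
  rw [this, Finset.card_attachFin, Finset.card_range]

lemma Rst_eq (D n2 : ℕ) : Rst D n2 = Finset.univ \ P1 D n2 := by
  rw [P1, ← Finset.filter_not]
  ext i; simp [Rst, not_lt]

lemma card_Rst (D n2 : ℕ) (h : n2 ≤ D) : (Rst D n2).card = D - n2 := by
  rw [Rst_eq, Finset.card_sdiff_of_subset (Finset.subset_univ _), card_P1 D n2 h]
  simp

def boxSet (D n2 : ℕ) (Y y : ℤ) (T : Finset (Fin D)) : Set (Fin D → ℤ) :=
  Set.pi Set.univ fun i =>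
    if i.1 < n2 then {Y} else if i ∈ T then {z | z ≤ y} else {z : ℤ | y < z}

lemma measure_boxSet (f : ℤ → ℝ) (hf0 : ∀ z, 0 ≤ f z) (hf1 : HasSum f 1)
    (D n2 : ℕ) (hn2 : n2 ≤ D) (Y y : ℤ) (T : Finset (Fin D)) (hT : T ⊆ Rst D n2) :
    Measure.pi (fun _ : Fin D => parentMeasure f) (boxSet D n2 Y y T)
      = ENNReal.ofReal (f Y) ^ n2 * ENNReal.ofReal (Fcdf f y) ^ T.card *
        ENNReal.ofReal (1 - Fcdf f y) ^ (D - n2 - T.card) := by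
  have := parent_prob f hf0 hf1
  unfold boxSet; rw [Measure.pi_pi]
  have hsplit := Finset.prod_filter_mul_prod_filter_not Finset.univ
    (fun i : Fin D => i.1 < n2)
    (fun i => parentMeasure f
      (if i.1 < n2 then {Y} else if i ∈ T then {z | z ≤ y} else {z : ℤ | y < z}))
  rw [← hsplit]
  have h1 : (∏ i ∈ Finset.univ.filter (fun i : Fin D => i.1 < n2),
      parentMeasure f
        (if i.1 < n2 then {Y} else if i ∈ T then {z | z ≤ y} else {z : ℤ | y < z}))
      = ENNReal.ofReal (f Y) ^ n2 := by
    rw [Finset.prod_congr rfl (fun i hi => ?_), Finset.prod_const, ← P1, card_P1 D n2 hn2]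
    rw [if_pos (Finset.mem_filter.mp hi).2, parent_singleton]
  have h2 : (∏ i ∈ Finset.univ.filter (fun i : Fin D => ¬ i.1 < n2),
      parentMeasure f
        (if i.1 < n2 then {Y} else if i ∈ T then {z | z ≤ y} else {z : ℤ | y < z}))
      = ENNReal.ofReal (Fcdf f y) ^ T.card *
        ENNReal.ofReal (1 - Fcdf f y) ^ (D - n2 - T.card) := by
    have hR : Finset.univ.filter (fun i : Fin D => ¬ i.1 < n2) = Rst D n2 := by
      ext i; simp [Rst, not_lt]
    rw [hR]
    rw [← Finset.prod_filter_mul_prod_filter_not (Rst D n2) (fun i => i ∈ T)]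
    have hTT : (Rst D n2).filter (fun i => i ∈ T) = T := by
      ext i
      simp only [Finset.mem_filter]
      exact ⟨fun h => h.2, fun h => ⟨hT h, h⟩⟩
    have hTc : (Rst D n2).filter (fun i => i ∉ T) = Rst D n2 \ T := by
      ext i; simp [Finset.mem_sdiff]
    congr 1
    · rw [hTT, Finset.prod_congr rfl (fun i hi => ?_), Finset.prod_const]
      have hiR := hT hi
      rw [if_neg (by simpa [Rst, not_lt] using (Finset.mem_filter.mp hiR).2), if_pos hi,
        parent_Iic f hf0 hf1]
    · rw [hTc, Finset.prod_congr rfl (fun i hi => ?_), Finset.prod_const,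
        Finset.card_sdiff_of_subset hT, card_Rst D n2 hn2]
      have hi' := Finset.mem_sdiff.mp hi
      rw [if_neg (by simpa [Rst, not_lt] using (Finset.mem_filter.mp hi'.1).2),
        if_neg hi'.2, parent_Ioi f hf0 hf1]
  rw [h1, h2, mul_assoc]

def eventB (D n2 : ℕ) (Y y : ℤ) (b : ℕ) : Set (Fin D → ℤ) :=
  {ω | (∀ i : Fin D, i.1 < n2 → ω i = Y) ∧
    b ≤ ((Rst D n2).filter fun i => ω i ≤ y).card}

lemma mem_boxSet {D n2 : ℕ} {Y y : ℤ} {T : Finset (Fin D)} {ω : Fin D → ℤ} :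
    ω ∈ boxSet D n2 Y y T ↔ ∀ i : Fin D,
      (i.1 < n2 → ω i = Y) ∧ (¬ i.1 < n2 → ((i ∈ T → ω i ≤ y) ∧ (i ∉ T → y < ω i))) := by
  simp only [boxSet, Set.mem_pi, Set.mem_univ, forall_true_left]
  refine forall_congr' fun i => ?_
  by_cases h : i.1 < n2
  · simp [h]
  · by_cases hT : i ∈ T <;> simp [h, hT]

lemma boxSet_filter {D n2 : ℕ} {Y y : ℤ} {T : Finset (Fin D)} (hT : T ⊆ Rst D n2)
    {ω : Fin D → ℤ} (hω : ω ∈ boxSet D n2 Y y T) :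
    (Rst D n2).filter (fun i => ω i ≤ y) = T := by
  rw [mem_boxSet] at hω
  ext i
  simp only [Finset.mem_filter, Rst, Finset.mem_univ, true_and, not_lt]
  constructor
  · rintro ⟨hn, hle⟩
    by_contra hiT
    exact absurd hle (not_le.mpr (((hω i).2 (not_lt.mpr hn)).2 hiT))
  · intro hiT
    have hiR := hT hiT
    simp only [Rst, Finset.mem_filter, Finset.mem_univ, true_and] at hiR
    exact ⟨hiR, ((hω i).2 (not_lt.mpr hiR)).1 hiT⟩

lemma eventB_eq (D n2 : ℕ) (Y y : ℤ) (b : ℕ) :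
    eventB D n2 Y y b =
      ⋃ T ∈ ((Rst D n2).powerset.filter fun T => b ≤ T.card), boxSet D n2 Y y T := by
  ext ω
  simp only [Set.mem_iUnion, Finset.mem_filter, Finset.mem_powerset, exists_prop]
  constructor
  · rintro ⟨hfirst, hcard⟩
    refine ⟨(Rst D n2).filter fun i => ω i ≤ y, ⟨Finset.filter_subset _ _, hcard⟩, ?_⟩
    rw [mem_boxSet]
    intro i
    refine ⟨hfirst i, fun hn => ⟨fun hiT => (Finset.mem_filter.mp hiT).2, fun hiT => ?_⟩⟩
    by_contra hle
    exact hiT (Finset.mem_filter.mpr ⟨by simp [Rst, not_lt.mp hn], not_lt.mp hle⟩)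
  · rintro ⟨T, ⟨hTR, hTb⟩, hω⟩
    refine ⟨fun i hi => ((mem_boxSet.mp hω) i).1 hi, ?_⟩
    rw [boxSet_filter hTR hω]
    exact hTb

lemma boxSet_disjoint {D n2 : ℕ} {Y y : ℤ} {T T' : Finset (Fin D)}
    (hT : T ⊆ Rst D n2) (hT' : T' ⊆ Rst D n2) (hne : T ≠ T') :
    Disjoint (boxSet D n2 Y y T) (boxSet D n2 Y y T') := by
  rw [Set.disjoint_left]
  intro ω h1 h2
  exact hne ((boxSet_filter hT h1).symm.trans (boxSet_filter hT' h2))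

lemma measure_eventB (f : ℤ → ℝ) (hf0 : ∀ z, 0 ≤ f z) (hf1 : HasSum f 1)
    (D n2 : ℕ) (hn2 : n2 ≤ D) (Y y : ℤ) (b : ℕ) :
    Measure.pi (fun _ : Fin D => parentMeasure f) (eventB D n2 Y y b)
      = ENNReal.ofReal (f Y ^ n2 * osCDF f b (D - n2) y) := by
  have hF0 := Fcdf_nonneg f hf0 y
  have hF1 : 0 ≤ 1 - Fcdf f y := sub_nonneg.mpr (Fcdf_le_one f hf0 hf1 y)
  rw [osCDF, eventB_eq, measure_biUnion_finset ?hd ?hm]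
  case hd =>
    intro T hT T' hT' hne
    simp only [Finset.coe_filter, Set.mem_setOf_eq, Finset.mem_powerset] at hT hT'
    exact boxSet_disjoint hT.1 hT'.1 hne
  case hm =>
    intro T _
    exact (Set.to_countable _).measurableSet
  rw [Finset.sum_congr rfl (fun T hT => measure_boxSet f hf0 hf1 D n2 hn2 Y y T
    (Finset.mem_powerset.mp (Finset.mem_filter.mp hT).1))]
  have hgroup : (Rst D n2).powerset.filter (fun T => b ≤ T.card)
      = (Finset.Icc b (D - n2)).biUnion (fun t => (Rst D n2).powersetCard t) := by
    ext T
    simp only [Finset.mem_filter, Finset.mem_powerset, Finset.mem_biUnion, Finset.mem_Icc,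
      Finset.mem_powersetCard]
    constructor
    · rintro ⟨hsub, hb⟩
      exact ⟨T.card, ⟨hb, (card_Rst D n2 hn2) ▸ Finset.card_le_card hsub⟩, hsub, rfl⟩
    · rintro ⟨t, ⟨hb, _⟩, hsub, hcard⟩
      exact ⟨hsub, hcard ▸ hb⟩
  rw [hgroup, Finset.sum_biUnion ?hdisj]
  case hdisj =>
    intro t ht t' ht' hne
    simp only [Function.onFun]
    rw [Finset.disjoint_left]
    intro T h1 h2
    rw [Finset.mem_powersetCard] at h1 h2
    exact hne (h1.2 ▸ h2.2)
  rw [ENNReal.ofReal_mul (pow_nonneg (hf0 Y) n2), ENNReal.ofReal_pow (hf0 Y),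
    ENNReal.ofReal_sum_of_nonneg (fun t _ => by positivity), Finset.mul_sum]
  refine Finset.sum_congr rfl fun t ht => ?_
  rw [Finset.sum_congr rfl (fun T hT => by
        rw [(Finset.mem_powersetCard.mp hT).2]),
    Finset.sum_const, Finset.card_powersetCard, card_Rst D n2 hn2,
    ENNReal.ofReal_mul (by positivity), ENNReal.ofReal_mul (by positivity),
    ENNReal.ofReal_pow hF0, ENNReal.ofReal_pow hF1, ENNReal.ofReal_natCast,
    nsmul_eq_mul]
  ring

lemma countLe_split {D n2 : ℕ} (hn2 : n2 ≤ D) {ω : Fin D → ℤ} {Y : ℤ}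
    (hfirst : ∀ i : Fin D, i.1 < n2 → ω i = Y) (y : ℤ) :
    countLe ω y = (if Y ≤ y then n2 else 0) + ((Rst D n2).filter fun i => ω i ≤ y).card := by
  have huniv : (Finset.univ : Finset (Fin D)) = P1 D n2 ∪ Rst D n2 := by
    rw [Rst_eq, Finset.union_sdiff_of_subset (Finset.subset_univ _)]
  have hdisj : Disjoint (P1 D n2) (Rst D n2) := Rst_eq D n2 ▸ Finset.disjoint_sdiff
  rw [countLe, huniv, Finset.filter_union, Finset.card_union_of_disjoint
    (Finset.disjoint_filter_filter hdisj)]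
  congr 1
  by_cases hy : Y ≤ y
  · rw [if_pos hy]
    have : (P1 D n2).filter (fun i => ω i ≤ y) = P1 D n2 :=
      Finset.filter_true_of_mem fun i hi => by
        rw [hfirst i (by simpa [P1] using hi)]; exact hy
    rw [this, card_P1 D n2 hn2]
  · rw [if_neg hy]
    rw [Finset.card_eq_zero, Finset.filter_eq_empty_iff]
    intro i hi
    rw [hfirst i (by simpa [P1] using hi)]
    exact hy

lemma osCDF_nil (f : ℤ → ℝ) (a m : ℕ) (y : ℤ) (h : m < a) : osCDF f a m y = 0 := by
  rw [osCDF, Finset.Icc_eq_empty (by omega), Finset.sum_empty]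

/-- **Closed form of the joint probability with `n2` ties** -/
theorem joint_probability_with_ties
    (f : ℤ → ℝ) (hf0 : ∀ z, 0 ≤ f z) (hf1 : HasSum f 1)
    (Y : ℤ) (D r n2 : ℕ) (hr1 : 1 ≤ r) (hrD : r ≤ D) (hn2 : n2 ≤ D) :
    P f D {ω | (∀ t : Fin D, t.1 < n2 → ω t = Y) ∧ osEq r ω Y}
      = f Y ^ n2 *
        (if n2 < min r (D - r + 1) then
           osCDF f (r - n2) (D - n2) Y - osCDF f r (D - n2) (Y - 1)
         else if r ≤ n2 ∧ n2 < D - r + 1 then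
           1 - osCDF f r (D - n2) (Y - 1)
         else if D - r + 1 ≤ n2 ∧ n2 < r then
           osCDF f (r - n2) (D - n2) Y
         else 1) := by
  have hprob := parent_prob f hf0 hf1
  set μpi := Measure.pi (fun _ : Fin D => parentMeasure f) with hμpi
  haveI : IsProbabilityMeasure μpi := by
    rw [hμpi]; infer_instance
  -- set identity
  have hseteq : {ω | (∀ t : Fin D, t.1 < n2 → ω t = Y) ∧ osEq r ω Y}
      = eventB D n2 Y Y (r - n2) \ eventB D n2 Y (Y - 1) r := by
    ext ω
    simp only [Set.mem_setOf_eq, Set.mem_diff, eventB, osEq]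
    constructor
    · rintro ⟨hfirst, h1, h2⟩
      have cY := countLe_split hn2 hfirst Y
      have cY' := countLe_split hn2 hfirst (Y - 1)
      rw [if_pos le_rfl] at cY
      rw [if_neg (by omega)] at cY'
      refine ⟨⟨hfirst, by omega⟩, ?_⟩
      rintro ⟨-, h3⟩
      omega
    · rintro ⟨⟨hfirst, h1⟩, h2⟩
      have cY := countLe_split hn2 hfirst Y
      have cY' := countLe_split hn2 hfirst (Y - 1)
      rw [if_pos le_rfl] at cY
      rw [if_neg (by omega)] at cY'
      have h3 : ¬ r ≤ ((Rst D n2).filter fun i => ω i ≤ Y - 1).card := by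
        intro h4
        exact h2 ⟨hfirst, h4⟩
      exact ⟨hfirst, by omega, by omega⟩
  have hsub : eventB D n2 Y (Y - 1) r ⊆ eventB D n2 Y Y (r - n2) := by
    rintro ω ⟨hfirst, h1⟩
    refine ⟨hfirst, ?_⟩
    have hmono : ((Rst D n2).filter fun i => ω i ≤ Y - 1).card
        ≤ ((Rst D n2).filter fun i => ω i ≤ Y).card :=
      Finset.card_le_card (Finset.monotone_filter_right _ fun i _ hi => hi.trans (by omega))
    omega
  have hmeasB : MeasurableSet (eventB D n2 Y (Y - 1) r) := (Set.to_countable _).measurableSet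
  have hadd : μpi (eventB D n2 Y Y (r - n2) \ eventB D n2 Y (Y - 1) r)
      + μpi (eventB D n2 Y (Y - 1) r) = μpi (eventB D n2 Y Y (r - n2)) := by
    rw [← measure_union Set.disjoint_sdiff_left hmeasB, Set.diff_union_of_subset hsub]
  have hA := measure_eventB f hf0 hf1 D n2 hn2 Y Y (r - n2)
  have hB := measure_eventB f hf0 hf1 D n2 hn2 Y (Y - 1) r
  rw [← hμpi] at hA hB
  have hAnn : 0 ≤ f Y ^ n2 * osCDF f (r - n2) (D - n2) Y := by
    have : 0 ≤ osCDF f (r - n2) (D - n2) Y := by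
      rw [osCDF]
      refine Finset.sum_nonneg fun t _ => ?_
      have := Fcdf_nonneg f hf0 Y
      have := sub_nonneg.mpr (Fcdf_le_one f hf0 hf1 Y)
      positivity
    exact mul_nonneg (pow_nonneg (hf0 Y) n2) this
  have hBnn : 0 ≤ f Y ^ n2 * osCDF f r (D - n2) (Y - 1) := by
    have : 0 ≤ osCDF f r (D - n2) (Y - 1) := by
      rw [osCDF]
      refine Finset.sum_nonneg fun t _ => ?_
      have := Fcdf_nonneg f hf0 (Y - 1)
      have := sub_nonneg.mpr (Fcdf_le_one f hf0 hf1 (Y - 1))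
      positivity
    exact mul_nonneg (pow_nonneg (hf0 Y) n2) this
  have htr := congrArg ENNReal.toReal hadd
  rw [ENNReal.toReal_add (measure_ne_top _ _) (measure_ne_top _ _), hA, hB,
    ENNReal.toReal_ofReal hAnn, ENNReal.toReal_ofReal hBnn] at htr
  have hPS : P f D {ω | (∀ t : Fin D, t.1 < n2 → ω t = Y) ∧ osEq r ω Y}
      = f Y ^ n2 * osCDF f (r - n2) (D - n2) Y - f Y ^ n2 * osCDF f r (D - n2) (Y - 1) := by
    rw [P, ← hμpi, hseteq]
    linarith
  rw [hPS, ← mul_sub]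
  congr 1
  split_ifs with h1 h2 h3
  · rfl
  · rw [Nat.sub_eq_zero_of_le h2.1, osCDF_zero]
  · rw [osCDF_nil f r (D - n2) (Y - 1) (by omega), sub_zero]
  · rw [lt_min_iff, not_and_or] at h1
    have hrn2 : r ≤ n2 := by omega
    have hm : D - n2 < r := by omega
    rw [Nat.sub_eq_zero_of_le hrn2, osCDF_zero, osCDF_nil f r (D - n2) (Y - 1) hm, sub_zero]
end
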